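/- For every a with 0 < a < √2, with ω0, τ0 as in the context, the functions z1(θ) = (1,0)ᵀ, z2(θ) = (sin(τ0 ω0 θ), ω0 cos(τ0 ω0 θ))ᵀ, z3(θ) = (cos(τ0 ω0 θ), −ω0 sin(τ0 ω0 θ))ᵀ on [−1,0] satisfy: (i) the differential relations z1'(θ) = 0, z2'(θ) = τ0 ω0 z3(θ), z3'(θ) = −τ0 ω0 z2(θ) for all θ ∈ [−1,0]; and (ii) the boundary conditions z_j'(0) = A z_j(0) + B z_j(−1) for j = 1,2,3, where A is the 2×2 matrix with rows (0, τ0) and (−τ0, a τ0) and B is the 2×2 matrix with B₂₁ = τ0 and all other entries 0. In other words, Φ_Λ = (z1, z2, z3) is a basis of solutions of the linearized equation satisfying U Φ_Λ = Φ_Λ U_Λ, where U_Λ is the 3×3 matrix with (U_Λ)₂₃ = −τ0 ω0, (U_Λ)₃₂ = τ0 ω0 and all other entries 0. -/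

import Mathlib

open Real

/-- `ω0(a) = √(2 - a²)`. -/
noncomputable def omega0 (a : ℝ) : ℝ := Real.sqrt (2 - a ^ 2)

/-- The critical delay `τ0(a)`. -/
noncomputable def tau0 (a : ℝ) : ℝ :=
  if 1 < a then Real.arcsin (a * omega0 a) / omega0 a
  else (Real.pi - Real.arcsin (a * omega0 a)) / omega0 a

/-- The basis functions `z1, z2, z3 : [−1,0] → ℝ²` of the generalized eigenspace. -/
noncomputable def zfun (a : ℝ) : Fin 3 → ℝ → ℝ × ℝ
  | 0 => fun _ => (1, 0)
  | 1 => fun θ => (Real.sin (tau0 a * omega0 a * θ), omega0 a * Real.cos (tau0 a * omega0 a * θ))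
  | 2 => fun θ => (Real.cos (tau0 a * omega0 a * θ), -omega0 a * Real.sin (tau0 a * omega0 a * θ))

/-- The matrix `A` applied to a vector: `A` has rows `(0, τ0)` and `(−τ0, a τ0)`. -/
noncomputable def matA (a : ℝ) (v : ℝ × ℝ) : ℝ × ℝ :=
  (tau0 a * v.2, -tau0 a * v.1 + a * tau0 a * v.2)

/-- The matrix `B` applied to a vector: `B₂₁ = τ0`, all other entries `0`. -/
noncomputable def matB (a : ℝ) (v : ℝ × ℝ) : ℝ × ℝ := (0, tau0 a * v.1)

lemma aux_trig (a : ℝ) (ha0 : 0 < a) (ha2 : a < Real.sqrt 2) :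
    Real.sin (tau0 a * omega0 a) = a * omega0 a ∧
    Real.cos (tau0 a * omega0 a) = a ^ 2 - 1 := by
  have h2 : a ^ 2 < 2 := by
    nlinarith [Real.sq_sqrt (show (0:ℝ) ≤ 2 by norm_num), ha0, ha2,
      Real.sqrt_nonneg (2:ℝ)]
  have hω2 : omega0 a ^ 2 = 2 - a ^ 2 := Real.sq_sqrt (by linarith)
  have hωpos : 0 < omega0 a := Real.sqrt_pos.mpr (by linarith)
  have hx2 : (a * omega0 a) ^ 2 = 1 - (a ^ 2 - 1) ^ 2 := by
    have : (a * omega0 a) ^ 2 = a ^ 2 * omega0 a ^ 2 := by ring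
    rw [this, hω2]; ring
  have hle : (a * omega0 a) ^ 2 ≤ 1 := by nlinarith [sq_nonneg (a ^ 2 - 1)]
  have hb1 : -1 ≤ a * omega0 a := by nlinarith [mul_pos ha0 hωpos]
  have hb2 : a * omega0 a ≤ 1 := by nlinarith [mul_pos ha0 hωpos]
  have hτω : tau0 a * omega0 a =
      (if 1 < a then Real.arcsin (a * omega0 a)
       else Real.pi - Real.arcsin (a * omega0 a)) := by
    unfold tau0
    split <;> field_simp
  have hcosarc : Real.cos (Real.arcsin (a * omega0 a)) = |a ^ 2 - 1| := by
    rw [Real.cos_arcsin,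
      show 1 - (a * omega0 a) ^ 2 = (a ^ 2 - 1) ^ 2 by nlinarith [hx2],
      Real.sqrt_sq_eq_abs]
  rw [hτω]
  split
  · rename_i h1
    constructor
    · exact Real.sin_arcsin hb1 hb2
    · rw [hcosarc, abs_of_nonneg (by nlinarith)]
  · rename_i h1
    push_neg at h1
    constructor
    · rw [Real.sin_pi_sub]; exact Real.sin_arcsin hb1 hb2
    · rw [Real.cos_pi_sub, hcosarc, abs_of_nonpos (by nlinarith)]; ring

theorem zfun_solves_linearization (a : ℝ) (ha0 : 0 < a) (ha2 : a < Real.sqrt 2) :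
    (∀ θ ∈ Set.Icc (-1 : ℝ) 0,
      HasDerivAt (zfun a 0) ((0 : ℝ), (0 : ℝ)) θ ∧
      HasDerivAt (zfun a 1) ((tau0 a * omega0 a) • zfun a 2 θ) θ ∧
      HasDerivAt (zfun a 2) ((-(tau0 a * omega0 a)) • zfun a 1 θ) θ) ∧
    (∀ j : Fin 3, deriv (zfun a j) 0 = matA a (zfun a j 0) + matB a (zfun a j (-1))) := by
  obtain ⟨hsin, hcos⟩ := aux_trig a ha0 ha2
  have h2 : a ^ 2 < 2 := by
    nlinarith [Real.sq_sqrt (show (0:ℝ) ≤ 2 by norm_num), ha0, ha2,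
      Real.sqrt_nonneg (2:ℝ)]
  have hω2 : omega0 a ^ 2 = 2 - a ^ 2 := Real.sq_sqrt (by linarith)
  have hd : ∀ θ : ℝ,
      HasDerivAt (zfun a 0) ((0 : ℝ), (0 : ℝ)) θ ∧
      HasDerivAt (zfun a 1) ((tau0 a * omega0 a) • zfun a 2 θ) θ ∧
      HasDerivAt (zfun a 2) ((-(tau0 a * omega0 a)) • zfun a 1 θ) θ := by
    intro θ
    have hlin : HasDerivAt (fun x : ℝ => tau0 a * omega0 a * x) (tau0 a * omega0 a) θ := by
      simpa using (hasDerivAt_id θ).const_mul (tau0 a * omega0 a)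
    have hs : HasDerivAt (fun x : ℝ => Real.sin (tau0 a * omega0 a * x))
        (Real.cos (tau0 a * omega0 a * θ) * (tau0 a * omega0 a)) θ :=
      (Real.hasDerivAt_sin (tau0 a * omega0 a * θ)).comp θ hlin
    have hcσ : HasDerivAt (fun x : ℝ => Real.cos (tau0 a * omega0 a * x))
        (-Real.sin (tau0 a * omega0 a * θ) * (tau0 a * omega0 a)) θ :=
      (Real.hasDerivAt_cos (tau0 a * omega0 a * θ)).comp θ hlin
    refine ⟨by exact hasDerivAt_const θ ((1:ℝ), (0:ℝ)), ?_, ?_⟩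
    · show HasDerivAt (zfun a 1) ((tau0 a * omega0 a) • zfun a 2 θ) θ
      have h := hs.prodMk (hcσ.const_mul (omega0 a))
      simp only [zfun, mul_neg, neg_mul] at h ⊢
      convert h using 1
      simp only [Prod.smul_mk, smul_eq_mul, Prod.mk.injEq]
      constructor <;> ring
    · show HasDerivAt (zfun a 2) ((-(tau0 a * omega0 a)) • zfun a 1 θ) θ
      have h := hcσ.prodMk ((hs.const_mul (omega0 a)).neg)
      simp only [zfun, mul_neg, neg_mul, Pi.neg_apply] at h ⊢
      convert h using 1
      simp only [Prod.smul_mk, smul_eq_mul, Prod.mk.injEq]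
      constructor <;> ring
  refine ⟨fun θ _ => hd θ, ?_⟩
  intro j
  fin_cases j
  · show deriv (zfun a 0) 0 = matA a (zfun a 0 0) + matB a (zfun a 0 (-1))
    rw [(hd 0).1.deriv]
    simp [zfun, matA, matB]
  · show deriv (zfun a 1) 0 = matA a (zfun a 1 0) + matB a (zfun a 1 (-1))
    rw [(hd 0).2.1.deriv]
    simp only [zfun, matA, matB, mul_zero, Real.sin_zero, Real.cos_zero, mul_one,
      mul_neg_one, Real.sin_neg, Real.cos_neg, hsin, hcos, Prod.smul_mk,
      smul_eq_mul, Prod.mk.injEq, Prod.mk_add_mk, Prod.ext_iff]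
    constructor <;> ring
  · show deriv (zfun a 2) 0 = matA a (zfun a 2 0) + matB a (zfun a 2 (-1))
    rw [(hd 0).2.2.deriv]
    simp only [zfun, matA, matB, mul_zero, Real.sin_zero, Real.cos_zero, mul_one,
      mul_neg_one, Real.sin_neg, Real.cos_neg, hsin, hcos, Prod.smul_mk,
      smul_eq_mul, Prod.mk.injEq, Prod.mk_add_mk, Prod.ext_iff]
    constructor
    · ring
    · linear_combination (-(tau0 a)) * hω2
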